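/- An additive category A is a Krull-Schmidt category if and only if A has split idempotents and the endomorphism ring of every object of A is semi-perfect. -/

import Mathlib

open CategoryTheory CategoryTheory.Limits

universe v u

/-- An additive category is a *Krull-Schmidt category* if every object decomposes into a
finite direct sum of objects having local endomorphism rings. -/
def IsKrullSchmidtCategory (A : Type u) [Category.{v} A] [Preadditive A]
    [HasFiniteBiproducts A] : Prop :=
  ∀ X : A, ∃ (n : ℕ) (f : Fin n → A),
    Nonempty (X ≅ ⨁ f) ∧ ∀ i, IsLocalRing (End (f i))

/-- A ring `Γ` is *semi-perfect* if the right `Γ`-module `Γ` admits a decomposition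
`Γ = P₁ ⊕ … ⊕ P_r` into submodules such that each `P_i` has a local endomorphism
ring. -/
def IsSemiperfectRing (Γ : Type*) [Ring Γ] : Prop :=
  ∃ (r : ℕ) (P : Fin r → Submodule Γᵐᵒᵖ Γ), DirectSum.IsInternal P ∧
    ∀ i, IsLocalRing (Module.End Γᵐᵒᵖ (P i))


section Split

set_option linter.unusedSectionVars false

variable {A : Type u} [Category.{v} A] [Preadditive A]

/-- auxiliary: an idempotent splits -/
def SplitsIdem {X : A} (e : X ⟶ X) : Prop :=
  ∃ (Y : A) (i : Y ⟶ X) (p : X ⟶ Y), i ≫ p = 𝟙 Y ∧ p ≫ i = e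

lemma SplitsIdem.conj {X : A} {e₀ e : X ⟶ X} (h : SplitsIdem e₀)
    {α α' : X ⟶ X} (hαα' : α ≫ α' = 𝟙 X) (he : e = α' ≫ e₀ ≫ α) :
    SplitsIdem e := by
  obtain ⟨W, i, p, hip, hpi⟩ := h
  refine ⟨W, i ≫ α, α' ≫ p, ?_, ?_⟩
  · rw [Category.assoc, ← Category.assoc α α' p, hαα', Category.id_comp, hip]
  · rw [he, ← hpi]; simp only [Category.assoc]

variable {X Y Z : A} (i₁ : Y ⟶ X) (p₁ : X ⟶ Y) (i₂ : Z ⟶ X) (p₂ : X ⟶ Z)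

/-- Corner reduction: if the `Y`-corner of `𝟙 - e` is invertible,
then `e` is conjugate to an idempotent supported on `Z`. -/
lemma corner_reduction
    (h11 : i₁ ≫ p₁ = 𝟙 Y) (h12 : i₁ ≫ p₂ = 0) (htot : p₁ ≫ i₁ + p₂ ≫ i₂ = 𝟙 X)
    (e : X ⟶ X) (he : e ≫ e = e)
    (hu : IsUnit ((1 : End Y) - (show End Y from i₁ ≫ e ≫ p₁))) :
    ∃ (α α' : X ⟶ X) (δ : Z ⟶ Z), α ≫ α' = 𝟙 X ∧ α' ≫ α = 𝟙 X ∧ δ ≫ δ = δ ∧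
      e = α' ≫ (p₂ ≫ δ ≫ i₂) ≫ α := by
  obtain ⟨v, hv⟩ := hu
  set a : Y ⟶ Y := i₁ ≫ e ≫ p₁ with ha
  set w : Y ⟶ Y := (↑v⁻¹ : End Y) with hwdef
  have hvw : w ≫ (𝟙 Y - a) = 𝟙 Y := by
    have h1 : ((1 : End Y) - (show End Y from i₁ ≫ e ≫ p₁)) * (↑v⁻¹ : End Y) = 1 := by
      rw [← hv]; exact v.mul_inv
    calc w ≫ (𝟙 Y - a) = ((1 : End Y) - (show End Y from i₁ ≫ e ≫ p₁)) * (↑v⁻¹ : End Y) := by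
          rw [End.mul_def]; rfl
    _ = 𝟙 Y := h1
  have hwv : (𝟙 Y - a) ≫ w = 𝟙 Y := by
    have h1 : (↑v⁻¹ : End Y) * ((1 : End Y) - (show End Y from i₁ ≫ e ≫ p₁)) = 1 := by
      rw [← hv]; exact v.inv_mul
    calc (𝟙 Y - a) ≫ w = (↑v⁻¹ : End Y) * ((1 : End Y) - (show End Y from i₁ ≫ e ≫ p₁)) := by
          rw [End.mul_def]; rfl
    _ = 𝟙 Y := h1
  set Θ : X ⟶ X := 𝟙 X - p₁ ≫ i₁ ≫ e with hΘdef
  set Θ' : X ⟶ X := 𝟙 X + p₁ ≫ w ≫ i₁ ≫ e with hΘ'def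
  have haw : a ≫ w = w - 𝟙 Y := by
    have h : w - a ≫ w = 𝟙 Y := by
      rw [← hwv]; simp [Preadditive.sub_comp]
    rw [← h]; abel
  have hwa : w ≫ a = w - 𝟙 Y := by
    have h : w - w ≫ a = 𝟙 Y := by
      rw [← hvw]; simp [Preadditive.comp_sub]
    rw [← h]; abel
  have hAB : (p₁ ≫ i₁ ≫ e) ≫ (p₁ ≫ w ≫ i₁ ≫ e) = p₁ ≫ w ≫ i₁ ≫ e - p₁ ≫ i₁ ≫ e := by
    have h1 : (p₁ ≫ i₁ ≫ e) ≫ (p₁ ≫ w ≫ i₁ ≫ e) = p₁ ≫ (a ≫ w) ≫ (i₁ ≫ e) := by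
      rw [ha]; simp only [Category.assoc]
    rw [h1, haw]
    simp [Preadditive.sub_comp, Preadditive.comp_sub]
  have hBA : (p₁ ≫ w ≫ i₁ ≫ e) ≫ (p₁ ≫ i₁ ≫ e) = p₁ ≫ w ≫ i₁ ≫ e - p₁ ≫ i₁ ≫ e := by
    have h1 : (p₁ ≫ w ≫ i₁ ≫ e) ≫ (p₁ ≫ i₁ ≫ e) = p₁ ≫ (w ≫ a) ≫ (i₁ ≫ e) := by
      rw [ha]; simp only [Category.assoc]
    rw [h1, hwa]
    simp [Preadditive.sub_comp, Preadditive.comp_sub]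
  have hΘΘ' : Θ ≫ Θ' = 𝟙 X := by
    rw [hΘdef, hΘ'def]
    simp only [Preadditive.sub_comp, Preadditive.comp_add, Preadditive.add_comp,
      Category.id_comp, Category.comp_id, hAB]
    abel
  have hΘ'Θ : Θ' ≫ Θ = 𝟙 X := by
    rw [hΘdef, hΘ'def]
    simp only [Preadditive.add_comp, Preadditive.comp_sub, Preadditive.sub_comp,
      Category.id_comp, Category.comp_id, hBA]
    abel
  set et : X ⟶ X := Θ ≫ e ≫ Θ' with hetdef
  have hete : et ≫ et = et := by
    rw [hetdef]
    calc (Θ ≫ e ≫ Θ') ≫ Θ ≫ e ≫ Θ' = Θ ≫ e ≫ (Θ' ≫ Θ) ≫ e ≫ Θ' := by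
          simp only [Category.assoc]
    _ = Θ ≫ (e ≫ e) ≫ Θ' := by rw [hΘ'Θ]; simp only [Category.id_comp, Category.assoc]
    _ = Θ ≫ e ≫ Θ' := by rw [he]
  have key1 : i₁ ≫ et = 0 := by
    have h1 : (i₁ ≫ Θ) ≫ e = 0 := by
      rw [hΘdef]
      simp only [Preadditive.comp_sub, Category.comp_id, Preadditive.sub_comp]
      rw [← Category.assoc i₁ p₁, h11, Category.id_comp, Category.assoc, he, sub_self]
    calc i₁ ≫ et = ((i₁ ≫ Θ) ≫ e) ≫ Θ' := by rw [hetdef]; simp only [Category.assoc]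
    _ = 0 := by rw [h1, Limits.zero_comp]
  set β : Z ⟶ Y := i₂ ≫ et ≫ p₁ with hβdef
  set Ψ : X ⟶ X := 𝟙 X + p₂ ≫ β ≫ i₁ with hΨdef
  set Ψ' : X ⟶ X := 𝟙 X - p₂ ≫ β ≫ i₁ with hΨ'def
  have hCC : (p₂ ≫ β ≫ i₁) ≫ (p₂ ≫ β ≫ i₁) = 0 := by
    calc (p₂ ≫ β ≫ i₁) ≫ (p₂ ≫ β ≫ i₁) = p₂ ≫ β ≫ (i₁ ≫ p₂) ≫ β ≫ i₁ := by
          simp only [Category.assoc]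
    _ = 0 := by rw [h12]; simp
  have hΨΨ' : Ψ ≫ Ψ' = 𝟙 X := by
    rw [hΨdef, hΨ'def]
    simp only [Preadditive.add_comp, Preadditive.comp_sub, Preadditive.sub_comp,
      Category.id_comp, Category.comp_id, hCC]
    abel
  have hΨ'Ψ : Ψ' ≫ Ψ = 𝟙 X := by
    rw [hΨdef, hΨ'def]
    simp only [Preadditive.add_comp, Preadditive.comp_add, Preadditive.sub_comp,
      Preadditive.comp_sub, Category.id_comp, Category.comp_id, hCC]
    abel
  have hetp₁ : et ≫ p₁ = et ≫ p₂ ≫ β := by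
    have h2 : et = et ≫ p₂ ≫ i₂ ≫ et := by
      calc et = et ≫ (𝟙 X) ≫ et := by rw [Category.id_comp, hete]
      _ = et ≫ (p₁ ≫ i₁ + p₂ ≫ i₂) ≫ et := by rw [htot]
      _ = et ≫ p₁ ≫ (i₁ ≫ et) + et ≫ p₂ ≫ i₂ ≫ et := by
            simp only [Preadditive.comp_add, Preadditive.add_comp, Category.assoc]
      _ = et ≫ p₂ ≫ i₂ ≫ et := by rw [key1]; simp
    calc et ≫ p₁ = (et ≫ p₂ ≫ i₂ ≫ et) ≫ p₁ := by rw [← h2]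
    _ = et ≫ p₂ ≫ β := by rw [hβdef]; simp only [Category.assoc]
  set e₂ : X ⟶ X := Ψ ≫ et ≫ Ψ' with he₂def
  have he₂e : e₂ ≫ e₂ = e₂ := by
    rw [he₂def]
    calc (Ψ ≫ et ≫ Ψ') ≫ Ψ ≫ et ≫ Ψ' = Ψ ≫ et ≫ (Ψ' ≫ Ψ) ≫ et ≫ Ψ' := by
          simp only [Category.assoc]
    _ = Ψ ≫ (et ≫ et) ≫ Ψ' := by rw [hΨ'Ψ]; simp only [Category.id_comp, Category.assoc]
    _ = Ψ ≫ et ≫ Ψ' := by rw [hete]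
  have k1 : i₁ ≫ e₂ = 0 := by
    have h1 : i₁ ≫ Ψ = i₁ := by
      rw [hΨdef]
      simp only [Preadditive.comp_add, Category.comp_id]
      rw [← Category.assoc i₁ p₂, h12]; simp
    calc i₁ ≫ e₂ = (i₁ ≫ Ψ) ≫ et ≫ Ψ' := by rw [he₂def]; simp only [Category.assoc]
    _ = (i₁ ≫ et) ≫ Ψ' := by rw [h1]; simp only [Category.assoc]
    _ = 0 := by rw [key1, Limits.zero_comp]
  have k2 : e₂ ≫ p₁ = 0 := by
    have h1 : Ψ' ≫ p₁ = p₁ - p₂ ≫ β := by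
      rw [hΨ'def]
      simp only [Preadditive.sub_comp, Category.id_comp, Category.assoc]
      rw [h11, Category.comp_id]
    calc e₂ ≫ p₁ = Ψ ≫ et ≫ (Ψ' ≫ p₁) := by rw [he₂def]; simp only [Category.assoc]
    _ = Ψ ≫ (et ≫ p₁ - et ≫ p₂ ≫ β) := by
          rw [h1]; simp only [Preadditive.comp_sub]
    _ = 0 := by rw [hetp₁, sub_self, Limits.comp_zero]
  set δ : Z ⟶ Z := i₂ ≫ e₂ ≫ p₂ with hδdef
  have hδe : δ ≫ δ = δ := by
    have hp₂i₂ : p₂ ≫ i₂ = 𝟙 X - p₁ ≫ i₁ := by rw [← htot]; abel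
    rw [hδdef]
    calc (i₂ ≫ e₂ ≫ p₂) ≫ i₂ ≫ e₂ ≫ p₂ = i₂ ≫ e₂ ≫ (p₂ ≫ i₂) ≫ e₂ ≫ p₂ := by
          simp only [Category.assoc]
    _ = i₂ ≫ (e₂ ≫ e₂) ≫ p₂ - i₂ ≫ (e₂ ≫ p₁) ≫ i₁ ≫ e₂ ≫ p₂ := by
          rw [hp₂i₂]
          simp only [Preadditive.sub_comp, Preadditive.comp_sub, Category.id_comp,
            Category.assoc]
    _ = i₂ ≫ e₂ ≫ p₂ := by rw [he₂e, k2]; simp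
  have he₂eq : e₂ = p₂ ≫ δ ≫ i₂ := by
    have h1 : e₂ = (p₁ ≫ i₁ + p₂ ≫ i₂) ≫ e₂ ≫ (p₁ ≫ i₁ + p₂ ≫ i₂) := by
      rw [htot, Category.id_comp, Category.comp_id]
    calc e₂ = (p₁ ≫ i₁ + p₂ ≫ i₂) ≫ e₂ ≫ (p₁ ≫ i₁ + p₂ ≫ i₂) := h1
    _ = p₁ ≫ (i₁ ≫ e₂) ≫ (p₁ ≫ i₁ + p₂ ≫ i₂) + p₂ ≫ i₂ ≫ (e₂ ≫ p₁) ≫ i₁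
          + p₂ ≫ i₂ ≫ e₂ ≫ p₂ ≫ i₂ := by
          simp only [Preadditive.add_comp, Preadditive.comp_add, Category.assoc]
          abel
    _ = p₂ ≫ δ ≫ i₂ := by
          rw [k1, k2, hδdef]
          simp only [Limits.zero_comp, Limits.comp_zero]
          simp only [Category.assoc]
          abel
  refine ⟨Ψ ≫ Θ, Θ' ≫ Ψ', δ, ?_, ?_, hδe, ?_⟩
  · calc (Ψ ≫ Θ) ≫ Θ' ≫ Ψ' = Ψ ≫ (Θ ≫ Θ') ≫ Ψ' := by simp only [Category.assoc]
    _ = 𝟙 X := by rw [hΘΘ', Category.id_comp, hΨΨ']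
  · calc (Θ' ≫ Ψ') ≫ Ψ ≫ Θ = Θ' ≫ (Ψ' ≫ Ψ) ≫ Θ := by simp only [Category.assoc]
    _ = 𝟙 X := by rw [hΨ'Ψ, Category.id_comp, hΘ'Θ]
  · have h2 : e₂ = (Ψ ≫ Θ) ≫ e ≫ (Θ' ≫ Ψ') := by
      rw [he₂def, hetdef]; simp only [Category.assoc]
    rw [← he₂eq, h2]
    refine Eq.symm ?_
    calc (Θ' ≫ Ψ') ≫ ((Ψ ≫ Θ) ≫ e ≫ Θ' ≫ Ψ') ≫ Ψ ≫ Θ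
        = Θ' ≫ (Ψ' ≫ Ψ) ≫ Θ ≫ e ≫ Θ' ≫ (Ψ' ≫ Ψ) ≫ Θ := by simp only [Category.assoc]
    _ = Θ' ≫ Θ ≫ e ≫ Θ' ≫ Θ := by rw [hΨ'Ψ]; simp only [Category.id_comp]
    _ = (Θ' ≫ Θ) ≫ e ≫ Θ' ≫ Θ := by simp only [Category.assoc]
    _ = e := by rw [hΘ'Θ]; simp

end Split

section MainSplit

variable {A : Type u} [Category.{v} A] [Preadditive A] [HasFiniteBiproducts A]

attribute [local instance] hasBinaryBiproducts_of_finite_biproducts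

/-- combining two orthogonal split idempotents -/
lemma splits_add_of_orthogonal {X Y₁ Y₂ : A}
    (ia : Y₁ ⟶ X) (pa : X ⟶ Y₁) (ib : Y₂ ⟶ X) (pb : X ⟶ Y₂)
    (ha : ia ≫ pa = 𝟙 Y₁) (hb : ib ≫ pb = 𝟙 Y₂)
    (hab : ia ≫ pb = 0) (hba : ib ≫ pa = 0) :
    SplitsIdem (pa ≫ ia + pb ≫ ib) := by
  refine ⟨Y₁ ⊞ Y₂, biprod.desc ia ib, biprod.lift pa pb, ?_, ?_⟩
  · apply biprod.hom_ext'
    · apply biprod.hom_ext <;>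
        simp [ha, hb, hab, hba]
    · apply biprod.hom_ext <;>
        simp [ha, hb, hab, hba]
  · rw [biprod.lift_desc]

/-- the inductive step, stated with abstract binary biproduct data -/
lemma splits_of_binary_data {X Y Z : A}
    (i₁ : Y ⟶ X) (p₁ : X ⟶ Y) (i₂ : Z ⟶ X) (p₂ : X ⟶ Z)
    (h11 : i₁ ≫ p₁ = 𝟙 Y) (h12 : i₁ ≫ p₂ = 0) (h21 : i₂ ≫ p₁ = 0) (h22 : i₂ ≫ p₂ = 𝟙 Z)
    (htot : p₁ ≫ i₁ + p₂ ≫ i₂ = 𝟙 X)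
    (hY : IsLocalRing (End Y))
    (hZ : ∀ δ : Z ⟶ Z, δ ≫ δ = δ → SplitsIdem δ)
    (e : X ⟶ X) (he : e ≫ e = e) : SplitsIdem e := by
  have hYadd : (show End Y from i₁ ≫ e ≫ p₁) +
      ((1 : End Y) - (show End Y from i₁ ≫ e ≫ p₁)) = 1 := by abel
  rcases hY.isUnit_or_isUnit_of_add_one hYadd with hcase | hcase
  · -- corner of e invertible; apply corner reduction to 𝟙 - e
    have he' : (𝟙 X - e) ≫ (𝟙 X - e) = 𝟙 X - e := by
      simp only [Preadditive.sub_comp, Preadditive.comp_sub, Category.id_comp,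
        Category.comp_id, he]
      abel
    have hcorner : (1 : End Y) - (show End Y from i₁ ≫ (𝟙 X - e) ≫ p₁)
        = (show End Y from i₁ ≫ e ≫ p₁) := by
      show 𝟙 Y - (i₁ ≫ (𝟙 X - e) ≫ p₁) = i₁ ≫ e ≫ p₁
      simp only [Preadditive.comp_sub, Preadditive.sub_comp, Category.id_comp]
      rw [h11]
      abel
    obtain ⟨α, α', δ, hαα', hα'α, hδ, heq⟩ :=
      corner_reduction i₁ p₁ i₂ p₂ h11 h12 htot (𝟙 X - e) he' (by rw [hcorner]; exact hcase)
    have heq2 : e = α' ≫ (𝟙 X - p₂ ≫ δ ≫ i₂) ≫ α := by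
      have h1 : α' ≫ (𝟙 X) ≫ α = 𝟙 X := by rw [Category.id_comp, hα'α]
      calc e = 𝟙 X - (𝟙 X - e) := by abel
      _ = α' ≫ (𝟙 X) ≫ α - α' ≫ (p₂ ≫ δ ≫ i₂) ≫ α := by rw [h1, ← heq]
      _ = α' ≫ (𝟙 X - p₂ ≫ δ ≫ i₂) ≫ α := by
            simp only [Preadditive.comp_sub, Preadditive.sub_comp]
    have hδ' : (𝟙 Z - δ) ≫ (𝟙 Z - δ) = 𝟙 Z - δ := by
      simp only [Preadditive.sub_comp, Preadditive.comp_sub, Category.id_comp,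
        Category.comp_id, hδ]
      abel
    obtain ⟨W, i₃, p₃, hip₃, hpi₃⟩ := hZ (𝟙 Z - δ) hδ'
    have hsplit : SplitsIdem (p₁ ≫ i₁ + (p₂ ≫ p₃) ≫ (i₃ ≫ i₂)) := by
      refine splits_add_of_orthogonal i₁ p₁ (i₃ ≫ i₂) (p₂ ≫ p₃) h11 ?_ ?_ ?_
      · calc (i₃ ≫ i₂) ≫ p₂ ≫ p₃ = i₃ ≫ (i₂ ≫ p₂) ≫ p₃ := by simp only [Category.assoc]
        _ = 𝟙 W := by rw [h22, Category.id_comp, hip₃]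
      · calc i₁ ≫ p₂ ≫ p₃ = (i₁ ≫ p₂) ≫ p₃ := by simp only [Category.assoc]
        _ = 0 := by rw [h12, Limits.zero_comp]
      · calc (i₃ ≫ i₂) ≫ p₁ = i₃ ≫ (i₂ ≫ p₁) := by simp only [Category.assoc]
        _ = 0 := by rw [h21, Limits.comp_zero]
    have hone : 𝟙 X - p₂ ≫ δ ≫ i₂ = p₁ ≫ i₁ + (p₂ ≫ p₃) ≫ (i₃ ≫ i₂) := by
      have h1 : (p₂ ≫ p₃) ≫ (i₃ ≫ i₂) = p₂ ≫ (𝟙 Z - δ) ≫ i₂ := by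
        rw [← hpi₃]; simp only [Category.assoc]
      rw [h1, ← htot]
      simp only [Preadditive.comp_sub, Preadditive.sub_comp, Category.id_comp]
      abel
    rw [← hone] at hsplit
    exact hsplit.conj hαα' heq2
  · -- corner of 𝟙 - e invertible: direct corner reduction
    obtain ⟨α, α', δ, hαα', hα'α, hδ, heq⟩ :=
      corner_reduction i₁ p₁ i₂ p₂ h11 h12 htot e he hcase
    obtain ⟨W, i₃, p₃, hip₃, hpi₃⟩ := hZ δ hδ
    have hsplit : SplitsIdem (p₂ ≫ δ ≫ i₂) := by
      refine ⟨W, i₃ ≫ i₂, p₂ ≫ p₃, ?_, ?_⟩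
      · calc (i₃ ≫ i₂) ≫ p₂ ≫ p₃ = i₃ ≫ (i₂ ≫ p₂) ≫ p₃ := by simp only [Category.assoc]
        _ = 𝟙 W := by rw [h22, Category.id_comp, hip₃]
      · calc (p₂ ≫ p₃) ≫ i₃ ≫ i₂ = p₂ ≫ (p₃ ≫ i₃) ≫ i₂ := by simp only [Category.assoc]
        _ = p₂ ≫ δ ≫ i₂ := by rw [hpi₃]
    exact hsplit.conj hαα' heq

lemma splits_of_biproduct_local :
    ∀ (n : ℕ) (f : Fin n → A), (∀ i, IsLocalRing (End (f i))) →
      ∀ (e : (⨁ f) ⟶ (⨁ f)), e ≫ e = e → SplitsIdem e := by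
  intro n
  induction n with
  | zero =>
    intro f _ e he
    have hid : 𝟙 (⨁ f) = 0 := by
      apply biproduct.hom_ext
      intro j
      exact j.elim0
    refine ⟨⨁ f, 𝟙 _, e, ?_, by simp⟩
    rw [Category.id_comp]
    calc e = e ≫ 𝟙 (⨁ f) := by simp
    _ = 0 := by rw [hid, Limits.comp_zero]
    _ = 𝟙 (⨁ f) := hid.symm
  | succ n IH =>
    intro f hf e he
    have h11 : biproduct.ι f 0 ≫ biproduct.π f 0 = 𝟙 (f 0) := biproduct.ι_π_self f 0
    have h12 : biproduct.ι f 0 ≫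
        biproduct.lift (fun j : Fin n => biproduct.π f j.succ) = 0 := by
      apply biproduct.hom_ext
      intro j
      simp [biproduct.ι_π, (Fin.succ_ne_zero j).symm]
    have h21 : biproduct.desc (fun j : Fin n => biproduct.ι f j.succ) ≫
        biproduct.π f 0 = 0 := by
      apply biproduct.hom_ext'
      intro j
      simp [biproduct.ι_π, Fin.succ_ne_zero j]
    have h22 : biproduct.desc (fun j : Fin n => biproduct.ι f j.succ) ≫
        biproduct.lift (fun j : Fin n => biproduct.π f j.succ)
        = 𝟙 (⨁ fun j : Fin n => f j.succ) := by
      apply biproduct.hom_ext'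
      intro j
      apply biproduct.hom_ext
      intro k
      by_cases h : j = k
      · subst h; simp
      · simp [biproduct.ι_π, h, fun hc => h (Fin.succ_injective n hc)]
    have htot : biproduct.π f 0 ≫ biproduct.ι f 0 +
        biproduct.lift (fun j : Fin n => biproduct.π f j.succ) ≫
          biproduct.desc (fun j : Fin n => biproduct.ι f j.succ) = 𝟙 (⨁ f) := by
      rw [biproduct.lift_desc, ← biproduct.total, Fin.sum_univ_succ]
    exact splits_of_binary_data _ _ _ _ h11 h12 h21 h22 htot (hf 0)
      (IH (fun j => f j.succ) (fun j => hf j.succ)) e he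


end MainSplit

section RingSide

variable {A : Type u} [Category.{v} A] [Preadditive A]

/-- The right ideal associated to an idempotent endomorphism. -/
def cornerIdeal {X : A} (e : End X) : Submodule (End X)ᵐᵒᵖ (End X) where
  carrier := {u : End X | u ≫ e = u}
  add_mem' := by
    intro u v hu hv
    show (u + v) ≫ e = u + v
    rw [Preadditive.add_comp]
    exact congrArg₂ (· + ·) hu hv
  zero_mem' := by
    show (0 : End X) ≫ e = 0
    simp
  smul_mem' := by
    intro g u hu
    show (MulOpposite.unop g ≫ u) ≫ e = MulOpposite.unop g ≫ u
    rw [Category.assoc]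
    exact congrArg _ hu

lemma mem_cornerIdeal {X : A} (e : End X) (u : End X) :
    u ∈ cornerIdeal e ↔ (u ≫ e : X ⟶ X) = u := Iff.rfl

lemma smul_cornerIdeal_val {X : A} {e : End X} (g : End X)
    (u : cornerIdeal e) : ((MulOpposite.op g • u : cornerIdeal e) : End X) = g ≫ (u : End X) :=
  rfl

end RingSide
section CornerEquiv

variable {A : Type u} [Category.{v} A] [Preadditive A]

lemma self_mem_cornerIdeal {X Y : A} (i : Y ⟶ X) (p : X ⟶ Y) (hip : i ≫ p = 𝟙 Y) :
    (show End X from p ≫ i) ∈ cornerIdeal (show End X from p ≫ i) := by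
  show ((p ≫ i) ≫ (p ≫ i) : X ⟶ X) = p ≫ i
  rw [Category.assoc, ← Category.assoc i p, hip, Category.id_comp]

lemma corner_comp_aux {X Y : A} (i : Y ⟶ X) (p : X ⟶ Y) (hip : i ≫ p = 𝟙 Y)
    (u w : End X) (hu : (u ≫ (p ≫ i) : X ⟶ X) = u)
    (hew : ((p ≫ i) ≫ w : X ⟶ X) = w) (hwe : (w ≫ (p ≫ i) : X ⟶ X) = w) :
    (u ≫ p ≫ (i ≫ w ≫ p) ≫ i : X ⟶ X) = u ≫ w := by
  calc (u ≫ p ≫ (i ≫ w ≫ p) ≫ i : X ⟶ X)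
      = (u ≫ (p ≫ i)) ≫ ((w ≫ (p ≫ i)) : X ⟶ X) := by simp only [Category.assoc]
  _ = u ≫ w := by rw [hu, hwe]

/-- The endomorphism ring of a retract `Y` of `X` is isomorphic to the endomorphism
ring of the corresponding right ideal of `End X`. -/
noncomputable def cornerEquiv {X Y : A} (i : Y ⟶ X) (p : X ⟶ Y) (hip : i ≫ p = 𝟙 Y) :
    End Y ≃+* Module.End (End X)ᵐᵒᵖ (cornerIdeal (show End X from p ≫ i)) where
  toFun a :=
    { toFun := fun u => ⟨(u : End X) ≫ p ≫ a ≫ i, by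
        show ((u : End X) ≫ p ≫ a ≫ i) ≫ (p ≫ i) = (u : End X) ≫ p ≫ a ≫ i
        simp only [Category.assoc]
        rw [← Category.assoc i p, hip, Category.id_comp]⟩
      map_add' := by
        intro u v
        apply Subtype.ext
        show ((u : End X) + (v : End X)) ≫ p ≫ a ≫ i = _
        rw [Preadditive.add_comp]
        rfl
      map_smul' := by
        intro r u
        apply Subtype.ext
        show (MulOpposite.unop r ≫ (u : End X)) ≫ p ≫ a ≫ i
            = MulOpposite.unop r ≫ ((u : End X) ≫ p ≫ a ≫ i)
        simp only [Category.assoc] }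
  invFun T := i ≫ ((T ⟨(p ≫ i : X ⟶ X), self_mem_cornerIdeal i p hip⟩ :
      cornerIdeal (show End X from p ≫ i)) : End X) ≫ p
  left_inv a := by
    show i ≫ ((p ≫ i : X ⟶ X) ≫ p ≫ a ≫ i) ≫ p = a
    calc i ≫ ((p ≫ i : X ⟶ X) ≫ p ≫ a ≫ i) ≫ p
        = (i ≫ p) ≫ (i ≫ p) ≫ a ≫ (i ≫ p) := by simp only [Category.assoc]
    _ = a := by rw [hip]; simp
  right_inv T := by
    have hwe : (((T ⟨(p ≫ i : X ⟶ X), self_mem_cornerIdeal i p hip⟩ :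
        cornerIdeal (show End X from p ≫ i)) : End X) ≫ (p ≫ i) : X ⟶ X)
        = ((T ⟨(p ≫ i : X ⟶ X), self_mem_cornerIdeal i p hip⟩ :
        cornerIdeal (show End X from p ≫ i)) : End X) :=
      (T ⟨(p ≫ i : X ⟶ X), self_mem_cornerIdeal i p hip⟩).2
    have h1 : (MulOpposite.op (show End X from p ≫ i)) •
        (⟨(p ≫ i : X ⟶ X), self_mem_cornerIdeal i p hip⟩ :
          cornerIdeal (show End X from p ≫ i))
        = ⟨(p ≫ i : X ⟶ X), self_mem_cornerIdeal i p hip⟩ :=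
      Subtype.ext (self_mem_cornerIdeal i p hip)
    have hew : ((p ≫ i : X ⟶ X) ≫ ((T ⟨(p ≫ i : X ⟶ X), self_mem_cornerIdeal i p hip⟩ :
        cornerIdeal (show End X from p ≫ i)) : End X) : X ⟶ X)
        = ((T ⟨(p ≫ i : X ⟶ X), self_mem_cornerIdeal i p hip⟩ :
        cornerIdeal (show End X from p ≫ i)) : End X) := by
      have h2 := T.map_smul (MulOpposite.op (show End X from p ≫ i))
        (⟨(p ≫ i : X ⟶ X), self_mem_cornerIdeal i p hip⟩ :
          cornerIdeal (show End X from p ≫ i))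
      rw [h1] at h2
      calc (p ≫ i : X ⟶ X) ≫ _ = ((MulOpposite.op (show End X from p ≫ i)) •
            (T ⟨(p ≫ i : X ⟶ X), self_mem_cornerIdeal i p hip⟩) :
            cornerIdeal (show End X from p ≫ i)).1 :=
            (smul_cornerIdeal_val _ _).symm
      _ = _ := by rw [← h2]
    apply LinearMap.ext
    intro u
    apply Subtype.ext
    have hu1 : (MulOpposite.op (u : End X)) •
        (⟨(p ≫ i : X ⟶ X), self_mem_cornerIdeal i p hip⟩ :
          cornerIdeal (show End X from p ≫ i)) = u := Subtype.ext u.2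
    have key : ((T u : cornerIdeal (show End X from p ≫ i)) : End X)
        = (u : End X) ≫ ((T ⟨(p ≫ i : X ⟶ X), self_mem_cornerIdeal i p hip⟩ :
          cornerIdeal (show End X from p ≫ i)) : End X) := by
      have h2 := T.map_smul (MulOpposite.op (u : End X))
        (⟨(p ≫ i : X ⟶ X), self_mem_cornerIdeal i p hip⟩ :
          cornerIdeal (show End X from p ≫ i))
      rw [hu1] at h2
      rw [h2, smul_cornerIdeal_val]
    show (u : End X) ≫ p ≫ (i ≫ _ ≫ p) ≫ i = ((T u : _) : End X)
    rw [key]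
    exact corner_comp_aux i p hip (u : End X) _ u.2 hew hwe
  map_mul' a b := by
    apply LinearMap.ext
    intro u
    apply Subtype.ext
    show (u : End X) ≫ p ≫ (b ≫ a) ≫ i = ((u : End X) ≫ p ≫ b ≫ i) ≫ p ≫ a ≫ i
    simp only [Category.assoc]
    rw [← Category.assoc i p, hip, Category.id_comp]
  map_add' a b := by
    apply LinearMap.ext
    intro u
    apply Subtype.ext
    show (u : End X) ≫ p ≫ (a + b) ≫ i
        = (u : End X) ≫ p ≫ a ≫ i + (u : End X) ≫ p ≫ b ≫ i
    have h : (a + b : End Y) = ((a : Y ⟶ Y) + (b : Y ⟶ Y) : Y ⟶ Y) := rfl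
    rw [h, Preadditive.add_comp, Preadditive.comp_add, Preadditive.comp_add]

end CornerEquiv

section Transfer

lemma isLocalRing_of_ringEquiv {R S : Type*} [Ring R] [Ring S] (e : R ≃+* S)
    (h : IsLocalRing R) : IsLocalRing S := by
  haveI : Nontrivial S := e.symm.toEquiv.nontrivial
  refine ⟨fun {a b} hab => ?_⟩
  have h1 : e.symm a + e.symm b = 1 := by rw [← map_add, hab, map_one]
  rcases h.isUnit_or_isUnit_of_add_one h1 with hc | hc
  · left
    have := hc.map e.toRingHom
    simpa using this
  · right
    have := hc.map e.toRingHom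
    simpa using this

end Transfer

section Internal

variable {A : Type u} [Category.{v} A] [Preadditive A]

lemma isInternal_cornerIdeal {X : A} {n : ℕ} (E : Fin n → End X)
    (hidem : ∀ j, (E j ≫ E j : X ⟶ X) = E j)
    (horth : ∀ j k, j ≠ k → (E j ≫ E k : X ⟶ X) = 0)
    (hsum : ∑ j, E j = (1 : End X)) :
    DirectSum.IsInternal (fun j => cornerIdeal (E j)) := by
  have hcoe : ∀ z : DirectSum (Fin n) (fun j => (cornerIdeal (E j) : Type v)),
      (DirectSum.coeAddMonoidHom fun j => cornerIdeal (E j)) z = ∑ j, ((z j : End X)) := by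
    intro z
    conv_lhs => rw [← DirectSum.sum_univ_of z]
    rw [map_sum]
    simp only [DirectSum.coeAddMonoidHom_of]
  constructor
  · rw [injective_iff_map_eq_zero]
    intro z hz
    rw [hcoe z] at hz
    have hcomp : ∀ k, (z k : End X) = 0 := by
      intro k
      have h2 : (∑ j, ((z j : End X))) ≫ E k = (z k : End X) := by
        rw [Preadditive.sum_comp]
        rw [Finset.sum_eq_single k]
        · exact (z k).2
        · intro j _ hj
          have hmem : ((z j : End X) ≫ E j : X ⟶ X) = (z j : End X) := (z j).2
          calc ((z j : End X) ≫ E k : X ⟶ X) = (z j : End X) ≫ E j ≫ E k := by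
                rw [← Category.assoc, hmem]
          _ = 0 := by rw [horth j k hj, Limits.comp_zero]
        · intro hk
          exact absurd (Finset.mem_univ k) hk
      rw [hz] at h2
      rw [← h2, Limits.zero_comp]
    apply DFinsupp.ext
    intro k
    exact Subtype.ext (hcomp k)
  · intro x
    refine ⟨∑ j, DirectSum.of (fun j => (cornerIdeal (E j) : Type v)) j
      ⟨(x ≫ E j : X ⟶ X), ?_⟩, ?_⟩
    · show ((x ≫ E j) ≫ E j : X ⟶ X) = x ≫ E j
      rw [Category.assoc, hidem]
    · rw [map_sum]
      simp only [DirectSum.coeAddMonoidHom_of]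
      calc ∑ j, (x ≫ E j : X ⟶ X) = x ≫ ∑ j, E j := by rw [Preadditive.comp_sum]
      _ = x := by rw [hsum]; exact Category.comp_id x
end Internal

section Main

variable {A : Type u} [Category.{v} A] [Preadditive A] [HasFiniteBiproducts A]

theorem forward_ic (hKS : IsKrullSchmidtCategory A) : IsIdempotentComplete A := by
  refine ⟨fun X p hp => ?_⟩
  obtain ⟨n, f, ⟨φ⟩, hloc⟩ := hKS X
  have hp' : (φ.inv ≫ p ≫ φ.hom) ≫ (φ.inv ≫ p ≫ φ.hom) = φ.inv ≫ p ≫ φ.hom := by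
    calc (φ.inv ≫ p ≫ φ.hom) ≫ (φ.inv ≫ p ≫ φ.hom)
        = φ.inv ≫ p ≫ (φ.hom ≫ φ.inv) ≫ p ≫ φ.hom := by simp only [Category.assoc]
    _ = φ.inv ≫ (p ≫ p) ≫ φ.hom := by rw [φ.hom_inv_id]; simp only [Category.id_comp,
          Category.assoc]
    _ = φ.inv ≫ p ≫ φ.hom := by rw [hp]
  obtain ⟨W, i, q, hiq, hqi⟩ := splits_of_biproduct_local n f hloc _ hp'
  refine ⟨W, i ≫ φ.inv, φ.hom ≫ q, ?_, ?_⟩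
  · calc (i ≫ φ.inv) ≫ φ.hom ≫ q = i ≫ (φ.inv ≫ φ.hom) ≫ q := by simp only [Category.assoc]
    _ = 𝟙 W := by rw [φ.inv_hom_id, Category.id_comp, hiq]
  · calc (φ.hom ≫ q) ≫ i ≫ φ.inv = φ.hom ≫ (q ≫ i) ≫ φ.inv := by simp only [Category.assoc]
    _ = φ.hom ≫ (φ.inv ≫ p ≫ φ.hom) ≫ φ.inv := by rw [hqi]
    _ = p := by simp

theorem forward_sp (hKS : IsKrullSchmidtCategory A) (X : A) :
    IsSemiperfectRing (End X) := by
  obtain ⟨n, f, ⟨φ⟩, hloc⟩ := hKS X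
  have hip : ∀ j, (biproduct.ι f j ≫ φ.inv) ≫ (φ.hom ≫ biproduct.π f j) = 𝟙 (f j) := by
    intro j
    calc (biproduct.ι f j ≫ φ.inv) ≫ (φ.hom ≫ biproduct.π f j)
        = biproduct.ι f j ≫ (φ.inv ≫ φ.hom) ≫ biproduct.π f j := by simp only [Category.assoc]
    _ = 𝟙 (f j) := by rw [φ.inv_hom_id, Category.id_comp, biproduct.ι_π_self]
  set E : Fin n → End X :=
    fun j => (show End X from (φ.hom ≫ biproduct.π f j) ≫ (biproduct.ι f j ≫ φ.inv)) with hE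
  have hidem : ∀ j, (E j ≫ E j : X ⟶ X) = E j := by
    intro j
    show ((φ.hom ≫ biproduct.π f j) ≫ (biproduct.ι f j ≫ φ.inv)) ≫
        ((φ.hom ≫ biproduct.π f j) ≫ (biproduct.ι f j ≫ φ.inv)) = _
    calc ((φ.hom ≫ biproduct.π f j) ≫ (biproduct.ι f j ≫ φ.inv)) ≫
        ((φ.hom ≫ biproduct.π f j) ≫ (biproduct.ι f j ≫ φ.inv))
        = (φ.hom ≫ biproduct.π f j) ≫ ((biproduct.ι f j ≫ φ.inv) ≫
            (φ.hom ≫ biproduct.π f j)) ≫ (biproduct.ι f j ≫ φ.inv) := by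
          simp only [Category.assoc]
    _ = E j := by rw [hip j, Category.id_comp]
  have horth : ∀ j k, j ≠ k → (E j ≫ E k : X ⟶ X) = 0 := by
    intro j k hjk
    show ((φ.hom ≫ biproduct.π f j) ≫ (biproduct.ι f j ≫ φ.inv)) ≫
        ((φ.hom ≫ biproduct.π f k) ≫ (biproduct.ι f k ≫ φ.inv)) = 0
    have h1 : (biproduct.ι f j ≫ φ.inv) ≫ (φ.hom ≫ biproduct.π f k) = 0 := by
      calc (biproduct.ι f j ≫ φ.inv) ≫ (φ.hom ≫ biproduct.π f k)
          = biproduct.ι f j ≫ (φ.inv ≫ φ.hom) ≫ biproduct.π f k := by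
            simp only [Category.assoc]
      _ = 0 := by rw [φ.inv_hom_id, Category.id_comp, biproduct.ι_π_ne f hjk]
    calc ((φ.hom ≫ biproduct.π f j) ≫ (biproduct.ι f j ≫ φ.inv)) ≫
        ((φ.hom ≫ biproduct.π f k) ≫ (biproduct.ι f k ≫ φ.inv))
        = (φ.hom ≫ biproduct.π f j) ≫ ((biproduct.ι f j ≫ φ.inv) ≫
            (φ.hom ≫ biproduct.π f k)) ≫ (biproduct.ι f k ≫ φ.inv) := by
          simp only [Category.assoc]
    _ = 0 := by rw [h1]; simp
  have hsum : ∑ j, E j = (1 : End X) := by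
    have h1 : ∑ j, E j = φ.hom ≫ (∑ j, biproduct.π f j ≫ biproduct.ι f j) ≫ φ.inv := by
      rw [hE]
      simp only [Preadditive.sum_comp, Preadditive.comp_sum, Category.assoc]
    rw [h1, biproduct.total]
    show φ.hom ≫ 𝟙 (⨁ f) ≫ φ.inv = 𝟙 X
    simp
  refine ⟨n, fun j => cornerIdeal (E j), isInternal_cornerIdeal E hidem horth hsum, ?_⟩
  intro j
  have hequiv : End (f j) ≃+* Module.End (End X)ᵐᵒᵖ (cornerIdeal (E j)) :=
    cornerEquiv (biproduct.ι f j ≫ φ.inv) (φ.hom ≫ biproduct.π f j) (hip j)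
  exact isLocalRing_of_ringEquiv (R := End (f j)) (S := Module.End (End X)ᵐᵒᵖ (cornerIdeal (E j))) hequiv (hloc j)

end Main

section Backward

variable {A : Type u} [Category.{v} A] [Preadditive A] [HasFiniteBiproducts A]

theorem backward_ks (hic : IsIdempotentComplete A)
    (hsp : ∀ X : A, IsSemiperfectRing (End X)) : IsKrullSchmidtCategory A := by
  intro X
  obtain ⟨r, P, hint, hloc⟩ := hsp X
  obtain ⟨z, hz⟩ := hint.2 (1 : End X)
  set E : Fin r → End X := fun j => (z j : End X) with hEdef
  have hEmem : ∀ j, E j ∈ P j := fun j => (z j).2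
  have hzsum : ∑ j, E j = (1 : End X) := by
    have h1 : (DirectSum.coeAddMonoidHom P) z = ∑ j, ((z j : End X)) := by
      conv_lhs => rw [← DirectSum.sum_univ_of z]
      rw [map_sum]
      simp only [DirectSum.coeAddMonoidHom_of]
    rw [hEdef, ← h1, hz]
  have huniq : ∀ u : (j : Fin r) → End X, (∀ j, u j ∈ P j) → ∑ j, u j = 0 →
      ∀ j, u j = 0 := by
    intro u hu h0 j
    have hcoe0 : (DirectSum.coeAddMonoidHom P)
        (∑ k, DirectSum.of (fun k => (P k : Type v)) k ⟨u k, hu k⟩) = 0 := by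
      rw [map_sum]
      simp only [DirectSum.coeAddMonoidHom_of]
      exact h0
    have hz0 : (∑ k, DirectSum.of (fun k => (P k : Type v)) k ⟨u k, hu k⟩) = 0 := by
      apply hint.1
      rw [hcoe0, map_zero]
    have h3 := congrArg (fun w => w j) hz0
    simp only at h3
    rw [DFinsupp.finset_sum_apply] at h3
    rw [Finset.sum_eq_single j] at h3
    · rw [DirectSum.of_eq_same] at h3
      have h5 : ((0 : DirectSum (Fin r) fun k => (P k : Type v)) j) = 0 := rfl
      rw [h5] at h3
      exact congrArg Subtype.val h3
    · intro k _ hk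
      exact DirectSum.of_eq_of_ne _ _ _ (Ne.symm hk)
    · intro hj
      exact absurd (Finset.mem_univ j) hj
  have hmemmul : ∀ j (x : End X), E j * x ∈ P j := by
    intro j x
    have h := (P j).smul_mem (MulOpposite.op x) (hEmem j)
    exact h
  have hkey : ∀ j (x : End X), x ∈ P j →
      (E j * x = x ∧ ∀ k, k ≠ j → E k * x = 0) := by
    intro j x hx
    have hsx : ∑ k, E k * x = x := by
      rw [← Finset.sum_mul, hzsum, one_mul]
    have hu : ∀ k, E k * x - (if k = j then x else 0) ∈ P k := by
      intro k
      by_cases hk : k = j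
      · subst hk
        simp only [if_pos rfl]
        exact (P k).sub_mem (hmemmul k x) hx
      · simp only [if_neg hk, sub_zero]
        exact hmemmul k x
    have h0 : ∑ k, (E k * x - (if k = j then x else 0)) = 0 := by
      rw [Finset.sum_sub_distrib, hsx, Finset.sum_ite_eq' Finset.univ j (fun _ => x)]
      simp
    have hres := huniq _ hu h0
    constructor
    · have h1 := hres j
      simp only [if_pos rfl] at h1
      exact sub_eq_zero.mp h1
    · intro k hk
      have h1 := hres k
      simp only [if_neg hk, sub_zero] at h1
      exact h1
  have hidem : ∀ j, (E j ≫ E j : X ⟶ X) = E j := by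
    intro j
    exact (hkey j (E j) (hEmem j)).1
  have horth : ∀ j k, j ≠ k → (E j ≫ E k : X ⟶ X) = 0 := by
    intro j k hjk
    exact (hkey j (E j) (hEmem j)).2 k (Ne.symm hjk)
  have hPcorner : ∀ j, P j = cornerIdeal (E j) := by
    intro j
    ext x
    constructor
    · intro hx
      exact (hkey j x hx).1
    · intro hx
      have h1 : E j * x ∈ P j := hmemmul j x
      have h2 : E j * x = x := hx
      rwa [h2] at h1
  have hsplit := fun j => hic.idempotents_split X (E j) (hidem j)
  choose Y ii pp hiip hppi using hsplit
  have hcross : ∀ j k, j ≠ k → ii j ≫ pp k = 0 := by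
    intro j k hjk
    have h1 : ii j ≫ (E j : X ⟶ X) = ii j := by
      rw [← hppi j, ← Category.assoc, hiip j, Category.id_comp]
    have h2 : (E k : X ⟶ X) ≫ pp k = pp k := by
      rw [← hppi k, Category.assoc, hiip k, Category.comp_id]
    have h3 : (ii j ≫ (E j : X ⟶ X)) ≫ ((E k : X ⟶ X) ≫ pp k) = 0 := by
      calc (ii j ≫ (E j : X ⟶ X)) ≫ ((E k : X ⟶ X) ≫ pp k)
          = ii j ≫ ((E j ≫ E k : X ⟶ X)) ≫ pp k := by simp only [Category.assoc]
      _ = 0 := by rw [horth j k hjk]; simp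
    rw [h1, h2] at h3
    exact h3
  have hhom_inv : biproduct.lift pp ≫ biproduct.desc ii = 𝟙 X := by
    rw [biproduct.lift_desc]
    rw [Finset.sum_congr rfl (fun j _ => hppi j)]
    exact hzsum
  have hinv_hom : biproduct.desc ii ≫ biproduct.lift pp = 𝟙 (⨁ Y) := by
    apply biproduct.hom_ext'
    intro j
    apply biproduct.hom_ext
    intro k
    simp only [biproduct.ι_desc_assoc, Category.assoc, biproduct.lift_π, Category.id_comp]
    by_cases h : j = k
    · subst h
      rw [hiip j, biproduct.ι_π_self]
    · rw [hcross j k h, biproduct.ι_π_ne Y h]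
  refine ⟨r, Y, ⟨Iso.mk (biproduct.lift pp) (biproduct.desc ii) hhom_inv hinv_hom⟩, ?_⟩
  intro j
  have hequiv : End (Y j) ≃+*
      Module.End (End X)ᵐᵒᵖ (cornerIdeal (show End X from pp j ≫ ii j)) :=
    cornerEquiv (ii j) (pp j) (hiip j)
  have hPC : cornerIdeal (show End X from pp j ≫ ii j) = P j := by
    have h1 : (show End X from pp j ≫ ii j) = E j := hppi j
    rw [h1]
    exact (hPcorner j).symm
  rw [hPC] at hequiv
  exact isLocalRing_of_ringEquiv
    (R := Module.End (End X)ᵐᵒᵖ (P j)) (S := End (Y j)) hequiv.symm (hloc j)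

end Backward


/-- An additive category is a Krull-Schmidt category if and only if it has split
idempotents and the endomorphism ring of every object is semi-perfect. -/
theorem isKrullSchmidt_iff_idempotentComplete_and_semiperfect
    (A : Type u) [Category.{v} A] [Preadditive A] [HasFiniteBiproducts A] :
    IsKrullSchmidtCategory A ↔
      IsIdempotentComplete A ∧ ∀ X : A, IsSemiperfectRing (End X) := by
  constructor
  · intro h
    exact ⟨forward_ic h, forward_sp h⟩
  · rintro ⟨hic, hsp⟩
    exact backward_ks hic hsp
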